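/- arXiv:2207.02535 — 5 statements merged into one kernel-verified Lean document; each statement's English description precedes it below -/
import Mathlib

section
/- Let C be a linear code in F_q^n. Then for every integer e with 0 ≤ e ≤ h, dim(Hull_e(C)) = dim(Hull_{h−e}(C)). -/
open Finset

variable {F : Type*}

/-- The `e`-Galois dual of a linear code `C ⊆ F_q^n` (`q = p^h`):
`C^{⊥_e} = {x | ∀ c ∈ C, ∑ i, x i * (c i)^(p^e) = 0}`. -/
def galoisDual [Field F] (p e : ℕ) {n : ℕ} (C : Submodule F (Fin n → F)) :
    Submodule F (Fin n → F) where
  carrier := {x | ∀ c ∈ C, ∑ i, x i * c i ^ p ^ e = 0}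
  add_mem' := by
    intro a b ha hb c hc
    have h1 := ha c hc
    have h2 := hb c hc
    simp only [Pi.add_apply, add_mul, Finset.sum_add_distrib, h1, h2, add_zero]
  zero_mem' := by
    intro c hc
    simp
  smul_mem' := by
    intro r a ha c hc
    have h1 := ha c hc
    simp only [Pi.smul_apply, smul_eq_mul, mul_assoc, ← Finset.mul_sum, h1, mul_zero]

/-- The `e`-Galois hull of `C`: `Hull_e(C) = C ∩ C^{⊥_e}`. -/
def galoisHull [Field F] (p e : ℕ) {n : ℕ} (C : Submodule F (Fin n → F)) :
    Submodule F (Fin n → F) :=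
  C ⊓ galoisDual p e C

/-- `G` is a generator matrix of `C`: its rows form a basis of `C`. -/
def IsGenMatrix [Field F] {n k : ℕ} (C : Submodule F (Fin n → F))
    (G : Matrix (Fin k) (Fin n) F) : Prop :=
  LinearIndependent F (fun i : Fin k => G i) ∧
    Submodule.span F (Set.range fun i : Fin k => G i) = C

/-- `d` is the minimum (Hamming) distance of the linear code `C`. -/
def IsMinDist [Field F] [DecidableEq F] {n : ℕ} (C : Submodule F (Fin n → F)) (d : ℕ) : Prop :=
  (∃ c ∈ C, c ≠ 0 ∧ hammingNorm c = d) ∧ ∀ c ∈ C, c ≠ 0 → d ≤ hammingNorm c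

open Module

lemma mem_galoisDual [Field F] {p e n : ℕ} {C : Submodule F (Fin n → F)} {x : Fin n → F} :
    x ∈ galoisDual p e C ↔ ∀ c ∈ C, ∑ i, x i * c i ^ p ^ e = 0 := Iff.rfl

section Bilin
variable [Field F] (n : ℕ)

/-- The standard dot-product bilinear form on `F^n`. -/
def dotB : LinearMap.BilinForm F (Fin n → F) :=
  LinearMap.mk₂ F (fun x y => ∑ i, x i * y i)
    (fun x x' y => by simp [add_mul, Finset.sum_add_distrib])
    (fun c x y => by simp [mul_assoc, Finset.mul_sum])
    (fun x y y' => by simp [mul_add, Finset.sum_add_distrib])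
    (fun c x y => by simp [Finset.mul_sum]; ring_nf; simp [mul_assoc, mul_comm, mul_left_comm])

@[simp] lemma dotB_apply (x y : Fin n → F) : dotB n x y = ∑ i, x i * y i := rfl

lemma dotB_isRefl : (dotB (F := F) n).IsRefl := by
  intro x y hxy
  simpa [mul_comm] using hxy

lemma dotB_nondegenerate : (dotB (F := F) n).Nondegenerate := by
  refine ⟨?_, ?_⟩
  all_goals
  intro x hx
  funext i
  have := hx (Pi.single i 1)
  simpa [Pi.single_apply, Finset.sum_ite_eq', mul_comm] using this

lemma dotB_finrank_orthogonal (W : Submodule F (Fin n → F)) :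
    finrank F W + finrank F ((dotB (F := F) n).orthogonal W) = n := by
  have h := (dotB (F := F) n).finrank_add_finrank_orthogonal (dotB_isRefl n) W
  rw [LinearMap.BilinForm.orthogonal_top_eq_bot (dotB_nondegenerate n)] at h
  rw [inf_bot_eq] at h
  simpa using h

lemma dotB_orthogonal_sup (A B : Submodule F (Fin n → F)) :
    (dotB (F := F) n).orthogonal (A ⊔ B) =
      (dotB (F := F) n).orthogonal A ⊓ (dotB (F := F) n).orthogonal B := by
  apply le_antisymm
  · intro x hx
    rw [LinearMap.BilinForm.mem_orthogonal_iff] at hx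
    exact ⟨fun a ha => hx a (Submodule.mem_sup_left ha),
      fun b hb => hx b (Submodule.mem_sup_right hb)⟩
  · rintro x ⟨hxA, hxB⟩
    rw [LinearMap.BilinForm.mem_orthogonal_iff]
    intro m hm
    rcases Submodule.mem_sup.mp hm with ⟨a, ha, b, hb, rfl⟩
    have h1 : dotB n a x = 0 := hxA a ha
    have h2 : dotB n b x = 0 := hxB b hb
    show dotB n (a + b) x = 0
    rw [map_add, LinearMap.add_apply, h1, h2, add_zero]

lemma finrank_inf_orthogonal_swap (A B : Submodule F (Fin n → F))
    (hAB : finrank F A = finrank F B) :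
    finrank F (A ⊓ (dotB (F := F) n).orthogonal B : Submodule F (Fin n → F)) =
      finrank F ((dotB (F := F) n).orthogonal A ⊓ B : Submodule F (Fin n → F)) := by
  have h1 := Submodule.finrank_sup_add_finrank_inf_eq A ((dotB (F := F) n).orthogonal B)
  have h2 := dotB_finrank_orthogonal n B
  have h3 := dotB_finrank_orthogonal n (A ⊔ (dotB (F := F) n).orthogonal B)
  rw [dotB_orthogonal_sup,
    LinearMap.BilinForm.orthogonal_orthogonal (dotB_nondegenerate n) (dotB_isRefl n)] at h3
  omega

end Bilin

section Frob
variable [Field F] [Fintype F] (p : ℕ) [Fact p.Prime] [CharP F p]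

/-- The `k`-iterated Frobenius, componentwise, as a semilinear map. -/
def frobSL (k n : ℕ) : (Fin n → F) →ₛₗ[iterateFrobenius F p k] (Fin n → F) where
  toFun x := fun i => x i ^ p ^ k
  map_add' x y := funext fun i => add_pow_char_pow (x i) (y i) p k
  map_smul' c x := funext fun i => by
    simp [iterateFrobenius_def, mul_pow]

omit [Fintype F] in
@[simp] lemma frobSL_apply (k n : ℕ) (x : Fin n → F) (i : Fin n) :
    frobSL p k n x i = x i ^ p ^ k := rfl

instance (k : ℕ) : RingHomSurjective (iterateFrobenius F p k) :=
  ⟨Finite.injective_iff_surjective.mp (iterateFrobenius F p k).injective⟩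

omit [Fintype F] in
lemma frobSL_injective (k n : ℕ) : Function.Injective (frobSL (F := F) p k n) := by
  intro x y hxy
  funext i
  have := congrFun hxy i
  exact (iterateFrobenius F p k).injective
    (by simpa [frobSL, iterateFrobenius_def] using this)

lemma frobSL_surjective (k n : ℕ) : Function.Surjective (frobSL (F := F) p k n) :=
  Finite.injective_iff_surjective.mp (frobSL_injective p k n)

omit [Fintype F] in
lemma sum_frob {n : ℕ} (k : ℕ) (f : Fin n → F) :
    (∑ i, f i) ^ p ^ k = ∑ i, f i ^ p ^ k := by
  rw [sum_pow_char_pow]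

/-- `Nat.card` is preserved under injective images of submodules. -/
lemma ncard_map_frobSL (k n : ℕ) (W : Submodule F (Fin n → F)) :
    Nat.card (W.map (frobSL p k n)) = Nat.card W := by
  apply Nat.card_congr
  refine (Equiv.ofBijective (fun x : W =>
    (⟨frobSL p k n x, Submodule.mem_map_of_mem x.2⟩ : W.map (frobSL p k n))) ⟨?_, ?_⟩).symm
  · intro a b hab
    ext
    exact congrFun (frobSL_injective p k n (by
      simpa [Subtype.ext_iff] using hab)) _
  · rintro ⟨y, x, hx, rfl⟩
    exact ⟨⟨x, hx⟩, rfl⟩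

lemma finrank_eq_of_ncard_eq {n : ℕ} (W₁ W₂ : Submodule F (Fin n → F))
    (h : Nat.card W₁ = Nat.card W₂) : finrank F W₁ = finrank F W₂ := by
  haveI : Fintype W₁ := Fintype.ofFinite _
  haveI : Fintype W₂ := Fintype.ofFinite _
  rw [Nat.card_eq_fintype_card, Nat.card_eq_fintype_card,
    card_eq_pow_finrank (K := F) (V := W₁), card_eq_pow_finrank (K := F) (V := W₂)] at h
  exact Nat.pow_right_injective Fintype.one_lt_card h

lemma finrank_map_frobSL (k n : ℕ) (W : Submodule F (Fin n → F)) :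
    finrank F (W.map (frobSL p k n)) = finrank F W :=
  finrank_eq_of_ncard_eq _ _ (ncard_map_frobSL p k n W)

end Frob

section Key
variable [Field F] [Fintype F] (p : ℕ) [Fact p.Prime] [CharP F p]

lemma pow_card_pow {h : ℕ} (hcard : Fintype.card F = p ^ h) (a : F) : a ^ p ^ h = a := by
  rw [← hcard]; exact FiniteField.pow_card a

lemma map_galoisDual (h e n : ℕ) (hcard : Fintype.card F = p ^ h) (he : e ≤ h)
    (C : Submodule F (Fin n → F)) :
    (galoisDual p e C).map (frobSL p (h - e) n) = (dotB n).orthogonal C := by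
  have key : ∀ x c : Fin n → F,
      dotB n c (frobSL p (h - e) n x) = (∑ i, x i * c i ^ p ^ e) ^ p ^ (h - e) := by
    intro x c
    rw [dotB_apply, sum_frob]
    refine Finset.sum_congr rfl fun i _ => ?_
    rw [mul_pow, ← pow_mul, ← pow_add, Nat.add_sub_cancel' he, pow_card_pow p hcard,
      mul_comm]
    simp
  have hne : p ^ (h - e) ≠ 0 := pow_ne_zero _ (Fact.out (p := p.Prime)).pos.ne'
  apply le_antisymm
  · rintro y ⟨x, hx, rfl⟩
    rw [LinearMap.BilinForm.mem_orthogonal_iff]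
    intro c hc
    rw [key x c, hx c hc, zero_pow hne]
  · intro y hy
    obtain ⟨x, rfl⟩ := frobSL_surjective p (h - e) n y
    rw [LinearMap.BilinForm.mem_orthogonal_iff] at hy
    refine Submodule.mem_map_of_mem ?_
    intro c hc
    have h0 := hy c hc
    rw [key x c] at h0
    exact pow_eq_zero_iff hne |>.mp h0

lemma map_orthogonal (k n : ℕ) (C : Submodule F (Fin n → F)) :
    ((dotB n).orthogonal C).map (frobSL p k n) = (dotB n).orthogonal (C.map (frobSL p k n)) := by
  have key : ∀ c z : Fin n → F,
      dotB n (frobSL p k n c) (frobSL p k n z) = (dotB n c z) ^ p ^ k := by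
    intro c z
    rw [dotB_apply, dotB_apply, sum_frob]
    exact Finset.sum_congr rfl fun i _ => (mul_pow _ _ _).symm
  have hne : p ^ k ≠ 0 := pow_ne_zero _ (Fact.out (p := p.Prime)).pos.ne'
  ext y
  constructor
  · rintro ⟨z, hz, rfl⟩
    rw [LinearMap.BilinForm.mem_orthogonal_iff]
    rintro d ⟨c, hc, rfl⟩
    rw [key c z,
      (LinearMap.BilinForm.mem_orthogonal_iff.mp hz c hc : dotB n c z = 0), zero_pow hne]
  · intro hy
    obtain ⟨z, rfl⟩ := frobSL_surjective p k n y
    rw [LinearMap.BilinForm.mem_orthogonal_iff] at hy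
    refine Submodule.mem_map_of_mem ?_
    rw [LinearMap.BilinForm.mem_orthogonal_iff]
    intro c hc
    have h0 := hy (frobSL p k n c) (Submodule.mem_map_of_mem hc)
    rw [key c z] at h0
    exact pow_eq_zero_iff hne |>.mp h0

lemma map_frobSL_card {h n : ℕ} (hcard : Fintype.card F = p ^ h)
    (W : Submodule F (Fin n → F)) : W.map (frobSL p h n) = W := by
  have hid : ∀ x : Fin n → F, frobSL p h n x = x :=
    fun x => funext fun i => pow_card_pow p hcard (x i)
  ext y
  constructor
  · rintro ⟨x, hx, rfl⟩; rwa [hid x]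
  · intro hy; exact ⟨y, hy, hid y⟩

lemma map_map_frobSL (k e n : ℕ) (W : Submodule F (Fin n → F)) :
    (W.map (frobSL p k n)).map (frobSL p e n) = W.map (frobSL p (k + e) n) := by
  have hcomp : ∀ x : Fin n → F, frobSL p e n (frobSL p k n x) = frobSL p (k + e) n x :=
    fun x => funext fun i => by simp [← pow_mul, ← pow_add]
  ext y
  constructor
  · rintro ⟨z, ⟨x, hx, rfl⟩, rfl⟩
    exact ⟨x, hx, (hcomp x).symm⟩
  · rintro ⟨x, hx, rfl⟩
    exact ⟨frobSL p k n x, ⟨x, hx, rfl⟩, hcomp x⟩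

end Key

/-- Theorem (symmetry of dimensions of Galois hulls):
`dim Hull_e(C) = dim Hull_{h-e}(C)` for every `0 ≤ e ≤ h`. -/
theorem finrank_galoisHull_symm
    (p h : ℕ) (hp : p.Prime) (hh : 0 < h)
    [Field F] [Fintype F] (hcard : Fintype.card F = p ^ h)
    (n e : ℕ) (he : e ≤ h)
    (C : Submodule F (Fin n → F)) :
    Module.finrank F (galoisHull p e C) = Module.finrank F (galoisHull p (h - e) C) := by
  haveI : Fact p.Prime := ⟨hp⟩
  haveI hrF : CharP F (ringChar F) := ringChar.charP F
  obtain ⟨m, hrp, hcard'⟩ := FiniteField.card F (ringChar F)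
  have hpr : p = ringChar F := by
    have hdvd : p ∣ ringChar F ^ (m : ℕ) := by
      rw [← hcard', hcard]
      exact dvd_pow_self p hh.ne'
    exact (Nat.prime_dvd_prime_iff_eq hp hrp).mp (hp.dvd_of_dvd_pow hdvd)
  haveI : CharP F p := hpr ▸ ringChar.charP F
  have key : ∀ e', e' ≤ h → finrank F (galoisHull p e' C) =
      finrank F ((C.map (frobSL p (h - e') n)) ⊓ (dotB n).orthogonal C : Submodule F _) := by
    intro e' he'
    rw [← finrank_map_frobSL p (h - e') n (galoisHull p e' C)]
    rw [galoisHull, Submodule.map_inf _ (frobSL_injective p (h - e') n),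
      map_galoisDual p h e' n hcard he']
  rw [key e he, key (h - e) (Nat.sub_le h e), Nat.sub_sub_self he]
  rw [finrank_inf_orthogonal_swap n _ C (finrank_map_frobSL p (h - e) n C)]
  rw [← map_orthogonal p (h - e) n C]
  rw [← finrank_map_frobSL p e n
    ((((dotB n).orthogonal C).map (frobSL p (h - e) n)) ⊓ C : Submodule F _)]
  rw [Submodule.map_inf _ (frobSL_injective p e n), map_map_frobSL p (h - e) e n,
    Nat.sub_add_cancel he, map_frobSL_card p hcard, inf_comm]
end

section
/- Let C be a linear code in F_q^n and let e be an integer with 0 ≤ e ≤ h. Then C is e-Galois self-orthogonal if and only if C is (h−e)-Galois self-orthogonal, i.e., C ⊆ C^{⊥_e} if and only if C ⊆ C^{⊥_{h−e}}. -/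
open Finset

variable {F : Type*}

lemma galois_aux_charP (p h : ℕ) (hp : p.Prime) (hh : 0 < h)
    [Field F] [Fintype F] (hcard : Fintype.card F = p ^ h) : CharP F p := by
  set r := ringChar F with hr
  haveI : CharP F r := ringChar.charP F
  have hrp : r.Prime := CharP.char_is_prime F r
  obtain ⟨n, -, hc⟩ := FiniteField.card F r
  have hdvd : r ∣ p := by
    have : r ∣ p ^ h := ⟨r ^ ((n : ℕ) - 1) , by
      rw [← pow_succ', Nat.sub_add_cancel n.pos, ← hc, hcard]⟩
    exact hrp.dvd_of_dvd_pow this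
  have : r = p := (Nat.prime_dvd_prime_iff_eq hrp hp).mp hdvd
  rwa [this] at ‹CharP F r›

/-- Theorem: `C` is `e`-Galois self-orthogonal iff `C` is `(h-e)`-Galois self-orthogonal. -/
theorem galois_selfOrthogonal_iff
    (p h : ℕ) (hp : p.Prime) (hh : 0 < h)
    [Field F] [Fintype F] (hcard : Fintype.card F = p ^ h)
    (n e : ℕ) (he : e ≤ h)
    (C : Submodule F (Fin n → F)) :
    C ≤ galoisDual p e C ↔ C ≤ galoisDual p (h - e) C := by
  have key : ∀ e', e' ≤ h → C ≤ galoisDual p e' C → C ≤ galoisDual p (h - e') C := by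
    intro e' he' hC x hx c hc
    haveI : Fact p.Prime := ⟨hp⟩
    haveI hchar : CharP F p := galois_aux_charP p h hp hh hcard
    have h0 := hC hc x hx  -- ∑ c i * x i ^ p ^ e' = 0
    have h1 : (∑ i, c i * x i ^ p ^ e') ^ p ^ (h - e') = 0 := by
      rw [h0]; exact zero_pow (pow_ne_zero _ hp.pos.ne')
    rw [← iterateFrobenius_def (R := F)] at h1
    rw [map_sum] at h1
    have h2 : ∀ i : Fin n, iterateFrobenius F p (h - e') (c i * x i ^ p ^ e')
        = x i * c i ^ p ^ (h - e') := by
      intro i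
      rw [map_mul, iterateFrobenius_def, iterateFrobenius_def, ← pow_mul,
        ← pow_add, Nat.add_sub_cancel' he', ← hcard, FiniteField.pow_card, mul_comm]
    simp only [h2] at h1
    exact h1
  constructor
  · exact key e he
  · intro hC
    have := key (h - e) (Nat.sub_le h e) hC
    rwa [Nat.sub_sub_self he] at this
end

section
/- Let q = p^h and fix an integer e with 0 ≤ e ≤ h−1. Suppose one of the following conditions holds: (1) p is even; (2) p is odd, h/gcd(e,h) is odd, and (p^h−1)/2 is even; (3) p is odd, h/gcd(e,h) is even, and (p^{gcd(e,h)}+1) divides (p^h−1)/2. Then for every integer i ≥ 0 there exist α_1, α_2, …, α_{2i} ∈ F_q \ {0} such that α_1^{p^e+1} + α_2^{p^e+1} + ⋯ + α_{2i}^{p^e+1} = 0. -/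
open Finset

variable {F : Type*}

private lemma exists_unit_orderOf' (F : Type*) [Field F] [Fintype F] (k : ℕ)
    (hk : k ∣ Fintype.card F - 1) : ∃ u : Fˣ, orderOf u = k := by
  haveI : Fintype Fˣ := Fintype.ofFinite _
  obtain ⟨g, hg⟩ := IsCyclic.exists_ofOrder_eq_natCard (α := Fˣ)
  rw [Nat.card_units, Nat.card_eq_fintype_card] at hg
  refine ⟨g ^ ((Fintype.card F - 1) / k), ?_⟩
  rw [← hg] at hk ⊢
  exact orderOf_pow_orderOf_div (by rw [hg]; have := Fintype.one_lt_card (α := F); omega) hk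

private lemma exists_pow_neg_one' {F : Type*} [Field F] [Fintype F] (k N t : ℕ)
    (hk : 2 ≤ k) (hdvd : 2 * k ∣ Fintype.card F - 1) (hN : N = k + 2 * k * t) :
    ∃ x : F, x ≠ 0 ∧ x ^ N = -1 := by
  obtain ⟨u, hu⟩ := exists_unit_orderOf' F (2 * k) hdvd
  have hone : (u : F) ^ (2 * k) = 1 := by
    rw [← Units.val_pow_eq_pow_val, ← hu, pow_orderOf_eq_one, Units.val_one]
  have hsq : ((u : F) ^ k) ^ 2 = 1 := by rw [← pow_mul, mul_comm k 2, hone]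
  have hne1 : (u : F) ^ k ≠ 1 := by
    intro hcon
    have h1 : u ^ k = 1 := Units.ext (by rw [Units.val_pow_eq_pow_val]; simpa using hcon)
    have h2 := orderOf_dvd_of_pow_eq_one h1
    rw [hu] at h2
    have := Nat.le_of_dvd (by omega) h2
    omega
  have hneg : (u : F) ^ k = -1 := by
    rcases sq_eq_one_iff.mp hsq with h | h
    · exact absurd h hne1
    · exact h
  refine ⟨(u : F), u.ne_zero, ?_⟩
  rw [hN, pow_add, pow_mul, hone, one_pow, mul_one, hneg]

private lemma sum_ite_fin' {M : Type*} [AddCommMonoid M] (i : ℕ) (A B : M) :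
    ∑ j : Fin (2 * i), (if (j : ℕ) < i then A else B) = i • A + i • B := by
  rw [Fin.sum_univ_eq_sum_range (fun j => if j < i then A else B) (2 * i), two_mul,
    Finset.sum_range_add]
  congr 1
  · rw [Finset.sum_congr rfl (fun j hj => if_pos (Finset.mem_range.mp hj)), Finset.sum_const,
      Finset.card_range]
  · rw [Finset.sum_congr rfl (fun j _ => if_neg (by omega)), Finset.sum_const, Finset.card_range]

private lemma pow_mod_four_one' {p : ℕ} (hp : p % 4 = 1) (n : ℕ) : p ^ n % 4 = 1 := by
  induction n with
  | zero => simp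
  | succ n ih => rw [pow_succ, Nat.mul_mod, ih, hp]

private lemma pow_mod_four_three' {p : ℕ} (hp : p % 4 = 3) (n : ℕ) :
    p ^ n % 4 = if n % 2 = 0 then 1 else 3 := by
  induction n with
  | zero => simp
  | succ n ih =>
    rw [pow_succ, Nat.mul_mod, ih, hp]
    split_ifs <;> omega


/-- Theorem: under one of the conditions (1) `p` even; (2) `p` odd, `h/gcd(e,h)` odd and
`(p^h-1)/2` even; (3) `p` odd, `h/gcd(e,h)` even and `(p^{gcd(e,h)}+1) ∣ (p^h-1)/2`,
for every `i ≥ 0` there exist `α₁,…,α_{2i} ∈ F_q^*` with `∑ α_j^{p^e+1} = 0`. -/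
theorem exists_even_family_sum_pow_eq_zero
    (p h : ℕ) (hp : p.Prime) (hh : 0 < h)
    [Field F] [Fintype F] (hcard : Fintype.card F = p ^ h)
    (e : ℕ) (he : e ≤ h - 1)
    (hcond : Even p ∨
      (Odd p ∧ Odd (h / Nat.gcd e h) ∧ Even ((p ^ h - 1) / 2)) ∨
      (Odd p ∧ Even (h / Nat.gcd e h) ∧ (p ^ Nat.gcd e h + 1) ∣ ((p ^ h - 1) / 2))) :
    ∀ i : ℕ, ∃ α : Fin (2 * i) → F,
      (∀ j, α j ≠ 0) ∧ ∑ j, α j ^ (p ^ e + 1) = 0 := by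
  suffices hab : ∃ a b : F, a ≠ 0 ∧ b ≠ 0 ∧ a ^ (p ^ e + 1) + b ^ (p ^ e + 1) = 0 by
    obtain ⟨a, b, ha, hb, hs⟩ := hab
    intro i
    refine ⟨fun j => if (j : ℕ) < i then a else b, fun j => ?_, ?_⟩
    · dsimp only; split <;> assumption
    · have key : ∀ j : Fin (2 * i), (if (j : ℕ) < i then a else b) ^ (p ^ e + 1)
          = if (j : ℕ) < i then a ^ (p ^ e + 1) else b ^ (p ^ e + 1) :=
        fun j => apply_ite (· ^ (p ^ e + 1)) _ _ _
      rw [Finset.sum_congr rfl fun j _ => key j, sum_ite_fin', ← smul_add, hs, smul_zero]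
  rcases hcond with hpe | ⟨hpo, hodd, heven⟩ | ⟨hpo, heven, hdvd⟩
  · -- p = 2
    have hp2 : p = 2 := (Nat.Prime.even_iff hp).mp hpe
    refine ⟨1, 1, one_ne_zero, one_ne_zero, ?_⟩
    have h2 : (2 : F) = 0 := by
      have hc := FiniteField.cast_card_eq_zero F
      rw [hcard, hp2] at hc
      push_cast at hc
      exact (pow_eq_zero_iff (by omega)).mp hc
    rw [one_pow]
    linear_combination h2
  · -- case 2
    set d := Nat.gcd e h with hd
    have hq_odd : Odd (p ^ h) := hpo.pow
    have h4 : 4 ∣ Fintype.card F - 1 := by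
      rw [hcard]
      obtain ⟨m, hm⟩ := heven
      obtain ⟨c, hc⟩ := hq_odd
      omega
    have hpe1 : p ^ e % 4 = 1 := by
      have hp13 : p % 4 = 1 ∨ p % 4 = 3 := by
        obtain ⟨c, hc⟩ := hpo; omega
      rcases hp13 with h1 | h3
      · exact pow_mod_four_one' h1 e
      · rcases Nat.even_or_odd e with hee | heo
        · rw [pow_mod_four_three' h3 e, if_pos (Nat.even_iff.mp hee)]
        · exfalso
          have hde : d ∣ e := Nat.gcd_dvd_left e h
          have hd_odd : Odd d := by
            obtain ⟨c, hc⟩ := hde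
            rw [hc, Nat.odd_mul] at heo
            exact heo.1
          have hh_odd : Odd h := by
            have hdh : d ∣ h := Nat.gcd_dvd_right e h
            have : d * (h / d) = h := Nat.mul_div_cancel' hdh
            rw [← this, Nat.odd_mul]
            exact ⟨hd_odd, hodd⟩
          have hph : p ^ h % 4 = 3 := by
            rw [pow_mod_four_three' h3 h,
              if_neg (by have := Nat.odd_iff.mp hh_odd; omega)]
          obtain ⟨m, hm⟩ := heven
          omega
    obtain ⟨m, hm⟩ : ∃ m, p ^ e + 1 = 2 + 2 * 2 * m := ⟨p ^ e / 4, by omega⟩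
    obtain ⟨x, hx0, hx⟩ := exists_pow_neg_one' (F := F) 2 (p ^ e + 1) m le_rfl h4 hm
    exact ⟨x, 1, hx0, one_ne_zero, by rw [hx, one_pow]; ring⟩
  · -- case 3
    set d := Nat.gcd e h with hd
    have hdpos : 0 < d := Nat.gcd_pos_of_pos_right e hh
    have hde : d ∣ e := Nat.gcd_dvd_left e h
    have hk_odd : Odd (e / d) := by
      have hcop : Nat.Coprime (e / d) (h / d) := Nat.coprime_div_gcd_div_gcd hdpos
      rcases Nat.even_or_odd (e / d) with hev | hodd'
      · exfalso
        obtain ⟨a, ha⟩ := hev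
        obtain ⟨b, hb⟩ := heven
        have h2 : 2 ∣ Nat.gcd (e / d) (h / d) :=
          Nat.dvd_gcd ⟨a, by omega⟩ ⟨b, by omega⟩
        rw [Nat.Coprime] at hcop
        omega
      · exact hodd'
    obtain ⟨c, hc⟩ : Odd (p ^ d) := hpo.pow
    have hMdvd : 2 * (p ^ d + 1) ∣ p ^ (2 * d) - 1 := by
      refine ⟨c, Nat.sub_eq_of_eq_add ?_⟩
      rw [two_mul, pow_add, hc]; ring
    obtain ⟨m, hm⟩ := hk_odd
    have he' : e = d + 2 * d * m := by
      have h1 : e / d * d = e := Nat.div_mul_cancel hde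
      rw [← h1, hm]; ring
    have hMe : 2 * (p ^ d + 1) ∣ p ^ e - p ^ d := by
      have h2 : p ^ e - p ^ d = p ^ d * ((p ^ (2 * d)) ^ m - 1) := by
        rw [Nat.mul_sub, mul_one, ← pow_mul, ← pow_add, ← he']
      rw [h2]
      exact Dvd.dvd.mul_left
        (hMdvd.trans (by simpa using Nat.sub_dvd_pow_sub_pow (p ^ (2 * d)) 1 m)) _
    obtain ⟨t, ht⟩ := hMe
    have hdle : d ≤ e := he' ▸ Nat.le_add_right _ _
    have hple : p ^ d ≤ p ^ e := Nat.pow_le_pow_right hp.pos hdle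
    have hpe_eq : p ^ e = 2 * (p ^ d + 1) * t + p ^ d := (Nat.sub_eq_iff_eq_add hple).mp ht
    have hNt : p ^ e + 1 = (p ^ d + 1) + 2 * (p ^ d + 1) * t := by rw [hpe_eq]; ring
    have hM : 2 * (p ^ d + 1) ∣ Fintype.card F - 1 := by
      rw [hcard]
      obtain ⟨s, hs⟩ := hdvd
      obtain ⟨c2, hc2⟩ : Odd (p ^ h) := hpo.pow
      refine ⟨s, ?_⟩
      have h3 : p ^ h - 1 = 2 * ((p ^ h - 1) / 2) := by omega
      rw [h3, hs]; ring
    have hk2 : 2 ≤ p ^ d + 1 := by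
      have : 1 ≤ p ^ d := Nat.one_le_pow _ _ hp.pos
      omega
    obtain ⟨x, hx0, hx⟩ := exists_pow_neg_one' (F := F) (p ^ d + 1) (p ^ e + 1) t hk2 hM hNt
    exact ⟨x, 1, hx0, one_ne_zero, by rw [hx, one_pow]; ring⟩
end

section
/- Let C be an e-Galois self-orthogonal linear code in F_q^n of dimension k and minimum distance d, where 0 ≤ e ≤ h−1. Then there exists a linear code C_1 in F_q^{n+1} of dimension k with dim(Hull_e(C_1)) = k−1 whose minimum distance d̃_1 satisfies d ≤ d̃_1 ≤ n + 2 − k. -/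
open Finset

variable {F : Type*}

/-- The extension map `c ↦ (c, φ c)` from `C ⊆ F^n` into `F^(n+1)`. -/
noncomputable def extMap [Field F] {n : ℕ} (C : Submodule F (Fin n → F)) (φ : C →ₗ[F] F) :
    C →ₗ[F] (Fin (n + 1) → F) where
  toFun c := Fin.snoc (c : Fin n → F) (φ c)
  map_add' c c' := by
    funext i
    refine Fin.lastCases ?_ (fun j => ?_) i <;>
      simp [Fin.snoc_last, Fin.snoc_castSucc]
  map_smul' r c := by
    funext i
    refine Fin.lastCases ?_ (fun j => ?_) i <;>
      simp [Fin.snoc_last, Fin.snoc_castSucc]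

@[simp] lemma extMap_castSucc [Field F] {n : ℕ} (C : Submodule F (Fin n → F))
    (φ : C →ₗ[F] F) (c : C) (i : Fin n) :
    extMap C φ c i.castSucc = (c : Fin n → F) i := by
  simp [extMap, Fin.snoc_castSucc]

@[simp] lemma extMap_last [Field F] {n : ℕ} (C : Submodule F (Fin n → F))
    (φ : C →ₗ[F] F) (c : C) :
    extMap C φ c (Fin.last n) = φ c := by
  simp [extMap, Fin.snoc_last]

lemma mem_galoisDual_iff [Field F] (p e : ℕ) {n : ℕ} (C : Submodule F (Fin n → F))
    (x : Fin n → F) :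
    x ∈ galoisDual p e C ↔ ∀ c ∈ C, ∑ i, x i * c i ^ p ^ e = 0 := Iff.rfl

lemma hammingNorm_le_hammingNorm_snoc [DecidableEq F] [Zero F] {n : ℕ}
    (v : Fin n → F) (a : F) :
    hammingNorm v ≤ hammingNorm (Fin.snoc v a : Fin (n + 1) → F) := by
  classical
  unfold hammingNorm
  apply Finset.card_le_card_of_injOn (fun i => Fin.castSucc i)
  · intro i hi
    simp only [Finset.mem_filter, Finset.mem_univ, true_and] at hi ⊢
    simpa [Fin.snoc_castSucc] using hi
  · intro i _ j _ hij
    exact Fin.castSucc_injective _ hij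

set_option maxHeartbeats 1000000 in
set_option synthInstance.maxHeartbeats 400000 in
/-- Theorem: from an `[n,k,d]_q` `e`-Galois self-orthogonal code there exists an
`[n+1, k, d̃₁]_q` code with `(k-1)`-dimensional `e`-Galois hull, where `d ≤ d̃₁ ≤ n+2-k`. -/
theorem exists_code_length_succ_hull_dim_pred
    (p h : ℕ) (hp : p.Prime) (hh : 0 < h)
    [Field F] [Fintype F] [DecidableEq F] (hcard : Fintype.card F = p ^ h)
    (n k d e : ℕ) (he : e ≤ h - 1)
    (C : Submodule F (Fin n → F)) (hso : C ≤ galoisDual p e C)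
    (hk : Module.finrank F C = k) (hd : IsMinDist C d) :
    ∃ C₁ : Submodule F (Fin (n + 1) → F),
      Module.finrank F C₁ = k ∧
        Module.finrank F (galoisHull p e C₁) = k - 1 ∧
          ∃ d' : ℕ, IsMinDist C₁ d' ∧ d ≤ d' ∧ d' ≤ n + 2 - k := by
  classical
  obtain ⟨⟨c₀, hc₀C, hc₀ne, -⟩, hdlb⟩ := hd
  have hCnt : Nontrivial C := ⟨⟨c₀, hc₀C⟩, 0, by simp [Subtype.ext_iff, hc₀ne]⟩
  have hk1 : 1 ≤ k := by
    rw [← hk]; exact Module.finrank_pos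
  obtain ⟨m, rfl⟩ : ∃ m, k = m + 1 := ⟨k - 1, by omega⟩
  have hkn : m + 1 ≤ n := by
    have := Submodule.finrank_le C
    rwa [hk, Module.finrank_fin_fun] at this
  -- a basis of C indexed by Fin (m+1), and the coordinate functional at 0
  obtain ⟨b⟩ : Nonempty (Module.Basis (Fin (m + 1)) F C) :=
    ⟨(Module.finBasis F C).reindex (finCongr hk)⟩
  let φ : C →ₗ[F] F := b.coord 0
  have hφb : φ (b 0) = 1 := by
    show b.coord 0 (b 0) = 1
    rw [Module.Basis.coord_apply, Module.Basis.repr_self, Finsupp.single_eq_same]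
  clear_value φ
  -- the extension map and the new code C₁
  let L : C →ₗ[F] (Fin (n + 1) → F) := extMap C φ
  let C₁ : Submodule F (Fin (n + 1) → F) := LinearMap.range L
  have hLinj : Function.Injective L := by
    rw [← LinearMap.ker_eq_bot]
    ext c
    simp only [LinearMap.mem_ker, Submodule.mem_bot]
    constructor
    · intro hc
      have : (c : Fin n → F) = 0 := by
        funext i
        have := congrFun hc i.castSucc
        simpa [L] using this
      exact Subtype.ext this
    · rintro rfl; simp
  have hrank : Module.finrank F C₁ = m + 1 := by
    rw [← hk]; exact LinearMap.finrank_range_of_inj hLinj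
  -- the key inner-product computation
  have key : ∀ c c' : C, ∑ i, L c i * L c' i ^ p ^ e = φ c * φ c' ^ p ^ e := by
    intro c c'
    rw [Fin.sum_univ_castSucc]
    have h0 : ∑ i : Fin n, (c : Fin n → F) i * (c' : Fin n → F) i ^ p ^ e = 0 :=
      hso c.2 (c' : Fin n → F) c'.2
    simp [L, h0]
  -- the hull is the image of ker φ
  have hull_eq : galoisHull p e C₁ = Submodule.map L (LinearMap.ker φ) := by
    apply le_antisymm
    · rintro x ⟨hx1, hx2⟩
      obtain ⟨c, rfl⟩ := hx1
      have h1 := hx2 (L (b 0)) ⟨b 0, rfl⟩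
      rw [key] at h1
      rw [hφb, one_pow, mul_one] at h1
      exact ⟨c, h1, rfl⟩
    · rintro x ⟨c, hc, rfl⟩
      refine ⟨⟨c, rfl⟩, ?_⟩
      rintro y ⟨c', rfl⟩
      rw [key, LinearMap.mem_ker.mp hc, zero_mul]
  have hull_rank : Module.finrank F (galoisHull p e C₁) = m := by
    rw [hull_eq]
    have hmap : Submodule.map L (LinearMap.ker φ) =
        LinearMap.range (L.comp (LinearMap.ker φ).subtype) := by
      rw [LinearMap.range_comp, Submodule.range_subtype]
    have hinj2 : Function.Injective ⇑(L.comp (LinearMap.ker φ).subtype) := by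
      intro a b hab
      simp only [LinearMap.comp_apply] at hab
      exact Subtype.ext (hLinj hab)
    rw [hmap, LinearMap.finrank_range_of_inj hinj2]
    -- rank-nullity for φ
    have hsurj : Function.Surjective φ := by
      intro a
      exact ⟨a • b 0, by simp [hφb]⟩
    have hrn := LinearMap.finrank_range_add_finrank_ker φ
    rw [LinearMap.range_eq_top.mpr hsurj, finrank_top, hk] at hrn
    have : Module.finrank F F = 1 := Module.finrank_self F
    omega
  -- minimum distance of C₁
  have hC₁lb : ∀ x ∈ C₁, x ≠ 0 → d ≤ hammingNorm x := by
    rintro x ⟨c, rfl⟩ hne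
    have hcne : c ≠ 0 := by rintro rfl; simp at hne
    have hvne : (c : Fin n → F) ≠ 0 := fun hz => hcne (Subtype.ext hz)
    calc d ≤ hammingNorm (c : Fin n → F) := hdlb _ c.2 hvne
      _ ≤ hammingNorm (Fin.snoc (c : Fin n → F) (φ c) : Fin (n + 1) → F) :=
          hammingNorm_le_hammingNorm_snoc _ _
      _ = hammingNorm (L c) := rfl
  -- Singleton bound: a nonzero codeword vanishing on the first m coordinates
  have hmle : m ≤ n + 1 := by omega
  obtain ⟨x, hxC₁, hxne, hxz⟩ :
      ∃ x, x ∈ C₁ ∧ x ≠ 0 ∧ ∀ i : Fin (n + 1), (i : ℕ) < m → x i = 0 := by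
    let ψ : C₁ →ₗ[F] (Fin m → F) := (LinearMap.funLeft F F (Fin.castLE hmle)).comp C₁.subtype
    have hnotinj : ¬ Function.Injective ψ := by
      intro hinj
      have := LinearMap.finrank_le_finrank_of_injective hinj
      rw [hrank, Module.finrank_fin_fun] at this
      simp [Fintype.card_fin] at this
    rw [injective_iff_map_eq_zero ψ] at hnotinj
    push_neg at hnotinj
    obtain ⟨y, hy0, hyne⟩ := hnotinj
    refine ⟨(y : Fin (n + 1) → F), y.2, ?_, ?_⟩
    · intro hz
      exact hyne (Subtype.ext hz)
    · intro i hi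
      have := congrFun hy0 ⟨(i : ℕ), hi⟩
      simpa [ψ, LinearMap.funLeft, Fin.castLE, Fin.ext_iff] using this
  have hxnorm : hammingNorm x ≤ n + 2 - (m + 1) := by
    unfold hammingNorm
    have hsub : Finset.univ.filter (fun i => x i ≠ 0) ⊆
        Finset.univ.filter (fun i : Fin (n + 1) => ¬ (i : ℕ) < m) := by
      intro i hi
      simp only [Finset.mem_filter, Finset.mem_univ, true_and] at hi ⊢
      intro hlt
      exact hi (hxz i hlt)
    have h1 := Finset.card_le_card hsub
    have h2 : m ≤ (Finset.univ.filter (fun i : Fin (n + 1) => (i : ℕ) < m)).card := by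
      have himg : (Finset.univ.image (fun j : Fin m => Fin.castLE hmle j)) ⊆
          Finset.univ.filter (fun i : Fin (n + 1) => (i : ℕ) < m) := by
        intro i hi
        simp only [Finset.mem_image, Finset.mem_univ, true_and] at hi
        obtain ⟨j, rfl⟩ := hi
        simp [Fin.castLE]
      have := Finset.card_le_card himg
      rwa [Finset.card_image_of_injective _ (Fin.castLE_injective hmle),
        Finset.card_univ, Fintype.card_fin] at this
    have h3 : (Finset.univ.filter (fun i : Fin (n + 1) => (i : ℕ) < m)).card
        + (Finset.univ.filter (fun i : Fin (n + 1) => ¬ (i : ℕ) < m)).card = n + 1 := by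
      rw [Finset.card_filter_add_card_filter_not
        (p := fun i : Fin (n + 1) => (i : ℕ) < m)]
      simp
    omega
  -- define d' as the minimum distance of C₁
  let S : Set ℕ := {r | ∃ x ∈ C₁, x ≠ 0 ∧ hammingNorm x = r}
  have hSne : S.Nonempty := ⟨hammingNorm x, x, hxC₁, hxne, rfl⟩
  obtain ⟨y, hyC₁, hyne, hynorm⟩ := Nat.sInf_mem hSne
  refine ⟨C₁, hrank, by simpa using hull_rank, sInf S, ⟨⟨y, hyC₁, hyne, hynorm⟩, ?_⟩, ?_, ?_⟩
  · intro c hc hcne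
    exact Nat.sInf_le ⟨c, hc, hcne, rfl⟩
  · rw [← hynorm]
    exact hC₁lb y hyC₁ hyne
  · calc sInf S ≤ hammingNorm x := Nat.sInf_le ⟨x, hxC₁, hxne, rfl⟩
      _ ≤ n + 2 - (m + 1) := hxnorm
end

section
/- Let C = GRS_k(a,v) be a generalized Reed–Solomon code of length n ≤ q and dimension k over F_q that is e-Galois self-orthogonal, where 0 ≤ e ≤ h−1 (so its minimum distance is d = n − k + 1). Then there exists a linear code C_1' in F_q^{n+1} of dimension k with dim(Hull_e(C_1')) = k−1 that is MDS, i.e., its minimum distance equals n + 2 − k = d + 1. -/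
open Finset

variable {F : Type*}

/-- The generalized Reed–Solomon code `GRS_k(a, v) ⊆ F^n`:
all words `(v₁ f(a₁), …, v_n f(a_n))` with `deg f ≤ k - 1`. -/
noncomputable def GRSCode [Field F] {n : ℕ} (a v : Fin n → F) (k : ℕ) :
    Submodule F (Fin n → F) :=
  Submodule.map (LinearMap.pi fun i => v i • Polynomial.leval (a i))
    (Polynomial.degreeLT F k)

/-- The extension map `f ↦ (v₁ f(a₁), …, v_n f(a_n), f_{k-1})`. -/
noncomputable def grsExtMap [Field F] {n : ℕ} (a v : Fin n → F) (k : ℕ) :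
    Polynomial F →ₗ[F] (Fin (n + 1) → F) where
  toFun f := Fin.snoc (fun i => v i * f.eval (a i)) (f.coeff (k - 1))
  map_add' f g := by
    funext i
    refine Fin.lastCases ?_ (fun j => ?_) i <;>
      simp [Fin.snoc_last, Fin.snoc_castSucc, mul_add]
  map_smul' c f := by
    funext i
    refine Fin.lastCases ?_ (fun j => ?_) i <;>
      simp [Fin.snoc_last, Fin.snoc_castSucc, mul_left_comm]

/-- A polynomial of degree `< k ≤ n` vanishing at `n` distinct points is zero. -/
lemma grs_poly_eq_zero [Field F] [DecidableEq F] {n k : ℕ} (a : Fin n → F) (ha : Function.Injective a)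
    (hkn : k ≤ n) {f : Polynomial F} (hf : f ∈ Polynomial.degreeLT F k)
    (h0 : ∀ i, f.eval (a i) = 0) : f = 0 := by
  by_contra hne
  have hcard : (Finset.univ : Finset (Fin n)).card ≤ f.roots.toFinset.card := by
    apply Finset.card_le_card_of_injOn a
    · intro i _
      simp only [Finset.mem_coe, Multiset.mem_toFinset, Polynomial.mem_roots hne, Polynomial.IsRoot.def]
      exact h0 i
    · exact fun i _ j _ hij => ha hij
  have h1 : f.roots.toFinset.card ≤ Multiset.card f.roots := Multiset.toFinset_card_le _
  have h2 : Multiset.card f.roots ≤ f.natDegree := Polynomial.card_roots' f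
  have h3 : f.natDegree < k :=
    (Polynomial.natDegree_lt_iff_degree_lt hne).mpr (Polynomial.mem_degreeLT.mp hf)
  simp only [Finset.card_univ, Fintype.card_fin] at hcard
  omega

/-- The number of zeros of a nonzero polynomial among distinct points is at most its degree. -/
lemma card_zeros_le [Field F] [DecidableEq F] {n : ℕ} (a : Fin n → F)
    (ha : Function.Injective a) {f : Polynomial F} (hne : f ≠ 0) :
    (Finset.univ.filter fun i : Fin n => f.eval (a i) = 0).card ≤ f.natDegree := by
  have hcard : (Finset.univ.filter fun i : Fin n => f.eval (a i) = 0).card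
      ≤ f.roots.toFinset.card := by
    apply Finset.card_le_card_of_injOn a
    · intro i hi
      simp only [Finset.mem_coe, Finset.mem_filter] at hi
      simp only [Finset.mem_coe, Multiset.mem_toFinset, Polynomial.mem_roots hne, Polynomial.IsRoot.def]
      exact hi.2
    · exact fun i _ j _ hij => ha hij
  have h1 : f.roots.toFinset.card ≤ Multiset.card f.roots := Multiset.toFinset_card_le _
  have h2 : Multiset.card f.roots ≤ f.natDegree := Polynomial.card_roots' f
  omega

/-- Theorem: if `GRS_k(a,v)` (length `n ≤ q`, dimension `k`) is `e`-Galois self-orthogonal,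
then there exists an `[n+1, k]_q` code with `(k-1)`-dimensional `e`-Galois hull which is MDS,
i.e. of minimum distance `n + 2 - k`. -/
theorem exists_MDS_length_succ_hull_dim_pred_of_GRS
    (p h : ℕ) (hp : p.Prime) (hh : 0 < h)
    [Field F] [Fintype F] [DecidableEq F] (hcard : Fintype.card F = p ^ h)
    (n k e : ℕ) (he : e ≤ h - 1)
    (hn : n ≤ p ^ h) (hk1 : 1 ≤ k) (hkn : k ≤ n)
    (a v : Fin n → F) (ha : Function.Injective a) (hv : ∀ i, v i ≠ 0)
    (hso : GRSCode a v k ≤ galoisDual p e (GRSCode a v k)) :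
    ∃ C₁ : Submodule F (Fin (n + 1) → F),
      Module.finrank F C₁ = k ∧
        Module.finrank F (galoisHull p e C₁) = k - 1 ∧
          IsMinDist C₁ (n + 2 - k) := by
  classical
  set φ := grsExtMap a v k with hφ
  have hφcast : ∀ (f : Polynomial F) (i : Fin n),
      φ f i.castSucc = v i * f.eval (a i) := by
    intro f i
    simp only [hφ, grsExtMap, LinearMap.coe_mk, AddHom.coe_mk]
    exact Fin.snoc_castSucc _ _ _
  have hφlast : ∀ f : Polynomial F, φ f (Fin.last n) = f.coeff (k - 1) := by
    intro f
    simp only [hφ, grsExtMap, LinearMap.coe_mk, AddHom.coe_mk]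
    exact Fin.snoc_last _ _
  -- truncations lie in the GRS code
  have hmemGRS : ∀ f ∈ Polynomial.degreeLT F k,
      (fun i => v i * f.eval (a i)) ∈ GRSCode a v k := by
    intro f hf
    refine ⟨f, hf, ?_⟩
    funext i
    simp [LinearMap.pi_apply, Polynomial.leval_apply, smul_eq_mul]
  have hsum0 : ∀ f ∈ Polynomial.degreeLT F k, ∀ g ∈ Polynomial.degreeLT F k,
      ∑ i : Fin n, (v i * f.eval (a i)) * (v i * g.eval (a i)) ^ p ^ e = 0 := by
    intro f hf g hg
    exact hso (hmemGRS f hf) _ (hmemGRS g hg)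
  -- injectivity on degreeLT m
  have hinj : ∀ m ≤ k, ∀ f ∈ Polynomial.degreeLT F m, φ f = 0 → f = 0 := by
    intro m hm f hf h0
    refine grs_poly_eq_zero a ha (le_trans hm hkn) hf ?_
    intro i
    have hi := congrFun h0 i.castSucc
    rw [hφcast] at hi
    simpa [hv i] using hi
  -- ranks
  have hrank : ∀ m ≤ k, Module.finrank F (Submodule.map φ (Polynomial.degreeLT F m)) = m := by
    intro m hm
    have h1 : Submodule.map φ (Polynomial.degreeLT F m)
        = LinearMap.range (φ ∘ₗ (Polynomial.degreeLT F m).subtype) := by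
      rw [LinearMap.range_comp, Submodule.range_subtype]
    have hinj' : Function.Injective (φ ∘ₗ (Polynomial.degreeLT F m).subtype) := by
      rw [← LinearMap.ker_eq_bot, LinearMap.ker_eq_bot']
      rintro ⟨f, hf⟩ h0
      exact Subtype.ext (hinj m hm f hf h0)
    rw [h1, LinearMap.finrank_range_of_inj hinj',
      (Polynomial.degreeLTEquiv F m).finrank_eq, Module.finrank_fin_fun]
  -- small degree from vanishing top coefficient
  have hdeg : ∀ f ∈ Polynomial.degreeLT F k, f.coeff (k - 1) = 0 →
      f ∈ Polynomial.degreeLT F (k - 1) := by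
    intro f hf hc
    rw [Polynomial.mem_degreeLT] at hf ⊢
    by_contra hlt
    push_neg at hlt
    have hne : f ≠ 0 := by
      rintro rfl
      simpa using hlt
    have h4 : f.natDegree < k := (Polynomial.natDegree_lt_iff_degree_lt hne).mpr hf
    have h5 : ¬ f.natDegree < k - 1 := fun h' =>
      absurd ((Polynomial.natDegree_lt_iff_degree_lt hne).mp h') (not_lt.mpr hlt)
    have h6 : f.natDegree = k - 1 := by omega
    have : f.coeff (k - 1) ≠ 0 := by
      rw [← h6]
      exact Polynomial.leadingCoeff_ne_zero.mpr hne
    exact this hc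
  refine ⟨Submodule.map φ (Polynomial.degreeLT F k), hrank k le_rfl, ?_, ?_⟩
  · -- hull
    have hhull : galoisHull p e (Submodule.map φ (Polynomial.degreeLT F k))
        = Submodule.map φ (Polynomial.degreeLT F (k - 1)) := by
      apply le_antisymm
      · rintro x ⟨⟨f, hf, rfl⟩, hx2⟩
        -- use y = φ (X^(k-1)) to deduce top coefficient vanishes
        have hg : (Polynomial.X ^ (k - 1) : Polynomial F) ∈ Polynomial.degreeLT F k := by
          rw [Polynomial.mem_degreeLT, Polynomial.degree_X_pow]
          exact Nat.cast_lt.mpr (Nat.sub_lt (by omega) (by omega))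
        have h0 := hx2 (φ (Polynomial.X ^ (k - 1))) ⟨_, hg, rfl⟩
        rw [Fin.sum_univ_castSucc] at h0
        simp only [hφcast, hφlast] at h0
        rw [hsum0 f hf _ hg, zero_add, Polynomial.coeff_X_pow_self, one_pow, mul_one] at h0
        exact ⟨f, hdeg f hf h0, rfl⟩
      · rintro x ⟨f, hf, rfl⟩
        have hf' : f ∈ Polynomial.degreeLT F k := Polynomial.degreeLT_mono (by omega) hf
        refine ⟨⟨f, hf', rfl⟩, ?_⟩
        rintro c ⟨g, hg, rfl⟩
        rw [Fin.sum_univ_castSucc]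
        simp only [hφcast, hφlast]
        rw [hsum0 f hf' g hg,
          Polynomial.coeff_eq_zero_of_degree_lt (Polynomial.mem_degreeLT.mp hf), zero_mul,
          zero_add]
    rw [hhull]
    exact hrank (k - 1) (by omega)
  · -- minimum distance
    have hnorm : ∀ c : Fin (n + 1) → F,
        hammingNorm c = (n + 1) - (Finset.univ.filter fun i => c i = 0).card := by
      intro c
      have h1 := Finset.card_filter_add_card_filter_not
        (s := (Finset.univ : Finset (Fin (n + 1)))) (p := fun i => c i = 0)
      simp only [Finset.card_univ, Fintype.card_fin] at h1
      have h2 : hammingNorm c = (Finset.univ.filter fun i => ¬ c i = 0).card := by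
        simp [hammingNorm, ne_eq]
      omega
    constructor
    · -- existence of a codeword of weight n + 2 - k
      set S : Finset (Fin n) := Finset.univ.filter fun i => (i : ℕ) < k - 1 with hSdef
      have hScard : S.card = k - 1 := by
        have : S = Finset.map (Fin.castLEEmb (show k - 1 ≤ n by omega)) Finset.univ := by
          ext i
          simp only [hSdef, Finset.mem_filter, Finset.mem_univ, true_and, Finset.mem_map,
            Fin.castLEEmb_apply]
          constructor
          · intro hi
            exact ⟨⟨i, hi⟩, rfl⟩
          · rintro ⟨j, rfl⟩
            exact j.isLt
        rw [this, Finset.card_map, Finset.card_univ, Fintype.card_fin]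
      set f₀ : Polynomial F := ∏ i ∈ S, (Polynomial.X - Polynomial.C (a i)) with hf₀def
      have hmonic : f₀.Monic := Polynomial.monic_prod_of_monic _ _
        (fun i _ => Polynomial.monic_X_sub_C _)
      have hne₀ : f₀ ≠ 0 := hmonic.ne_zero
      have hnatdeg : f₀.natDegree = k - 1 := by
        rw [hf₀def, Polynomial.natDegree_prod _ _
          (fun i _ => Polynomial.X_sub_C_ne_zero _)]
        simp [Polynomial.natDegree_X_sub_C, hScard]
      have hf₀mem : f₀ ∈ Polynomial.degreeLT F k := by
        rw [Polynomial.mem_degreeLT, ← Polynomial.natDegree_lt_iff_degree_lt hne₀, hnatdeg]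
        omega
      have hcoeff1 : f₀.coeff (k - 1) = 1 := by
        rw [← hnatdeg]; exact hmonic.coeff_natDegree
      have heval : ∀ j : Fin n, f₀.eval (a j) = 0 ↔ j ∈ S := by
        intro j
        rw [hf₀def, Polynomial.eval_prod, Finset.prod_eq_zero_iff]
        constructor
        · rintro ⟨i, hi, hzero⟩
          simp only [Polynomial.eval_sub, Polynomial.eval_X, Polynomial.eval_C,
            sub_eq_zero] at hzero
          rwa [ha hzero]
        · intro hj
          exact ⟨j, hj, by simp⟩
      refine ⟨φ f₀, ⟨f₀, hf₀mem, rfl⟩, ?_, ?_⟩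
      · intro h0
        have := congrFun h0 (Fin.last n)
        rw [hφlast, hcoeff1] at this
        exact one_ne_zero this
      · rw [hnorm]
        have hZ : (Finset.univ.filter fun i => φ f₀ i = 0)
            = S.map ⟨Fin.castSucc, Fin.castSucc_injective n⟩ := by
          ext i
          simp only [Finset.mem_filter, Finset.mem_univ, true_and, Finset.mem_map,
            Function.Embedding.coeFn_mk]
          refine Fin.lastCases ?_ (fun j => ?_) i
          · rw [hφlast, hcoeff1]
            constructor
            · intro h1; exact absurd h1 one_ne_zero
            · rintro ⟨j, _, hj⟩
              exact absurd hj (by simp [Fin.ext_iff]; omega)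
          · rw [hφcast]
            constructor
            · intro h1
              have h2 : f₀.eval (a j) = 0 := by
                rcases mul_eq_zero.mp h1 with h | h
                · exact absurd h (hv j)
                · exact h
              exact ⟨j, (heval j).mp h2, rfl⟩
            · rintro ⟨j', hj', hj⟩
              have : j' = j := Fin.castSucc_injective n hj
              subst this
              rw [(heval j').mpr hj', mul_zero]
        rw [hZ, Finset.card_map, hScard]
        omega
    · -- lower bound on weights
      rintro c ⟨f, hf, rfl⟩ hne
      have hfne : f ≠ 0 := by rintro rfl; exact hne (map_zero φ)
      rw [hnorm]
      have hfnatdeg : f.natDegree < k := (Polynomial.natDegree_lt_iff_degree_lt hfne).mpr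
        (Polynomial.mem_degreeLT.mp hf)
      have hZ0 : (Finset.univ.filter fun i : Fin n => f.eval (a i) = 0).card ≤ f.natDegree :=
        card_zeros_le a ha hfne
      have hkey : (Finset.univ.filter fun i => φ f i = 0).card ≤ k - 1 := by
        by_cases hc0 : f.coeff (k - 1) = 0
        · -- small degree: at most (k-2) zeros among first n, plus possibly the last
          have hdeg' : f.natDegree < k - 1 := (Polynomial.natDegree_lt_iff_degree_lt hfne).mpr
            (Polynomial.mem_degreeLT.mp (hdeg f hf hc0))
          have hsub : (Finset.univ.filter fun i => φ f i = 0) ⊆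
              insert (Fin.last n) ((Finset.univ.filter fun i : Fin n => f.eval (a i) = 0).map
                ⟨Fin.castSucc, Fin.castSucc_injective n⟩) := by
            intro i hi
            simp only [Finset.mem_filter, Finset.mem_univ, true_and] at hi
            refine Fin.lastCases ?_ (fun j hj => ?_) i hi
            · intro _; exact Finset.mem_insert_self _ _
            · refine Finset.mem_insert_of_mem ?_
              rw [hφcast] at hj
              simp only [Finset.mem_map, Finset.mem_filter, Finset.mem_univ, true_and,
                Function.Embedding.coeFn_mk]
              have h2 : f.eval (a j) = 0 := by
                rcases mul_eq_zero.mp hj with h' | h'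
                · exact absurd h' (hv j)
                · exact h'
              exact ⟨j, h2, rfl⟩
          have := Finset.card_le_card hsub
          have h3 := Finset.card_insert_le (Fin.last n)
            ((Finset.univ.filter fun i : Fin n => f.eval (a i) = 0).map
              ⟨Fin.castSucc, Fin.castSucc_injective n⟩)
          rw [Finset.card_map] at h3
          omega
        · -- full degree: last coordinate nonzero, at most k-1 zeros among first n
          have hsub : (Finset.univ.filter fun i => φ f i = 0) ⊆
              (Finset.univ.filter fun i : Fin n => f.eval (a i) = 0).map
                ⟨Fin.castSucc, Fin.castSucc_injective n⟩ := by
            intro i hi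
            simp only [Finset.mem_filter, Finset.mem_univ, true_and] at hi
            refine Fin.lastCases ?_ (fun j hj => ?_) i hi
            · intro h1
              rw [hφlast] at h1
              exact absurd h1 hc0
            · rw [hφcast] at hj
              simp only [Finset.mem_map, Finset.mem_filter, Finset.mem_univ, true_and,
                Function.Embedding.coeFn_mk]
              have h2 : f.eval (a j) = 0 := by
                rcases mul_eq_zero.mp hj with h' | h'
                · exact absurd h' (hv j)
                · exact h'
              exact ⟨j, h2, rfl⟩
          have := Finset.card_le_card hsub
          rw [Finset.card_map] at this
          omega
      omega
end
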